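/- Under the standing assumptions, a seller's expected profit from product sales is strictly increasing in the targeting precision: for all β1, β2 with 0 ≤ β1 < β2 ≤ 1, πAC(β1) < πAC(β2). -/

import Mathlib

/-- Key algebraic lemma: the difference-quotient factor is negative when the
quadratic condition `m*D^2 < c*D + 2*c*k` holds at both points. -/
lemma stmt_10_key (c m k D1 D2 : ℝ) (hc : 0 < c) (hm : 0 < m) (hk : 0 < k)
    (h1 : 0 < D1) (h2 : 0 < D2)
    (P1 : m * D1 ^ 2 < c * D1 + 2 * c * k) (P2 : m * D2 ^ 2 < c * D2 + 2 * c * k) :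
    m ^ 2 * D1 ^ 2 * D2 ^ 2 < 2 * c * m * k * D1 * D2 + c ^ 2 * D1 * D2 + c ^ 2 * k * (D1 + D2) := by
  nlinarith [mul_pos h1 h2, sq_nonneg (D1 - D2), mul_pos hc hm, mul_pos hc hk,
    mul_pos (mul_pos hc hm) (mul_pos h1 h2),
    mul_lt_mul_of_pos_left P1 (mul_pos hm (pow_pos h2 2)),
    mul_lt_mul_of_pos_left P2 (mul_pos hm (pow_pos h1 2)),
    mul_lt_mul_of_pos_left P1 (mul_pos hc h2),
    mul_lt_mul_of_pos_left P2 (mul_pos hc h1),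
    sq_nonneg (m*D1*D2 - c*k), sq_nonneg (m*D1*D2 - c*(D1+D2))]

/-- The quadratic condition holds for any `0 < D` with `D + k ≤ S`. -/
lemma stmt_10_P (t w k D c S : ℝ) (hw : 0 < w) (hwt : w < t) (hk : 0 < k)
    (hD : 0 < D) (hDS : D + k ≤ S) (hc : c = t * S / 2 - k * w / 2) :
    w / 2 * D ^ 2 < c * D + 2 * c * k := by
  subst hc
  have h1 : 0 ≤ (S - (D + k)) * (t * (D + 2*k)) :=
    mul_nonneg (by linarith) (mul_pos (hw.trans hwt) (by linarith)).le
  have h2 : 0 < (t - w) * (D^2 + k*D + 2*k^2) := by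
    have h : 0 < D^2 + k*D + 2*k^2 := by nlinarith [pow_pos hD 2, mul_pos hk hD, mul_pos hk hk]
    exact mul_pos (by linarith) h
  have h3 : 0 < t * (k * D) := mul_pos (hw.trans hwt) (mul_pos hk hD)
  nlinarith [h1, h2, h3]

set_option maxHeartbeats 1000000 in
/-- Under the standing assumptions, a seller's expected profit from product
sales is strictly increasing in the targeting precision. -/
theorem stmt_10 (t v α δ r : ℝ) (ht : 0 < t) (hδ : 0 < δ) (hδα : δ < α) (hα : α < 1)
    (hr0 : 0 < r) (hr1 : r < 1)
    (hv1 : t * (α / ((2 - α) * δ) + 1 / 2) < v) (hv2 : v < 2 * t) :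
    let πAC : ℝ → ℝ := fun β =>
      (1 - r) * (α * δ * (t - 2 * v) + v * (α + δ) - β * (α - δ) * (v - t)) ^ 2 *
        (α * (1 - β) + δ * (1 - α + β)) /
        (2 * t * (2 * (α + δ) - 3 * α * δ - 2 * β * (α - δ)) ^ 2)
    ∀ β1 β2 : ℝ, 0 ≤ β1 → β1 < β2 → β2 ≤ 1 → πAC β1 < πAC β2 := by
  intro πAC β1 β2 hb1 hb12 hb2
  simp only [πAC]
  have hy : (0:ℝ) < (2 - α) * δ := mul_pos (by linarith) hδ
  -- derive v > t from the lower bound on v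
  have hH : 2 * α * t < (2 - α) * δ * (2 * v - t) := by
    have h := mul_lt_mul_of_pos_right hv1 hy
    have expand : t * (α / ((2 - α) * δ) + 1 / 2) * ((2 - α) * δ)
        = t * α + t * ((2 - α) * δ) / 2 := by
      have h2a : (2 - α) ≠ 0 := (by linarith : (0:ℝ) < 2 - α).ne'
      field_simp
    rw [expand] at h
    nlinarith [h]
  have hvt : t < v := by
    nlinarith [mul_pos hδ ht, mul_pos (sub_pos.2 hδα) ht, mul_pos (mul_pos hδ ht) (sub_pos.2 hα),
      mul_pos hδ (sub_pos.2 hδα)]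
  obtain ⟨D1, hD1e⟩ : ∃ x : ℝ, x = 2 * (α + δ) - 3 * α * δ - 2 * β1 * (α - δ) := ⟨_, rfl⟩
  obtain ⟨D2, hD2e⟩ : ∃ x : ℝ, x = 2 * (α + δ) - 3 * α * δ - 2 * β2 * (α - δ) := ⟨_, rfl⟩
  obtain ⟨k, hke⟩ : ∃ x : ℝ, x = α * δ := ⟨_, rfl⟩
  obtain ⟨c, hce⟩ : ∃ x : ℝ, x = t * (α + δ) - α * δ * (t + v) / 2 := ⟨_, rfl⟩
  have hk : 0 < k := by rw [hke]; exact mul_pos (hδ.trans hδα) hδ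
  have hc : 0 < c := by
    rw [hce]
    nlinarith [mul_pos (mul_pos (hδ.trans hδα) hδ) (by linarith : (0:ℝ) < 2 * t - v),
      mul_pos ht (mul_pos hδ (sub_pos.2 hα)),
      mul_pos ht (mul_pos (hδ.trans hδα) (sub_pos.2 (hδ.trans (hδα.trans hα))))]
  have hD2 : 0 < D2 := by
    rw [hD2e]
    nlinarith [mul_nonneg (by linarith : (0:ℝ) ≤ 1 - β2) (by linarith : (0:ℝ) ≤ α - δ),
      mul_pos hδ (by linarith : (0:ℝ) < 4 - 3 * α)]
  have hD12 : D2 < D1 := by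
    rw [hD1e, hD2e]
    nlinarith [mul_pos (by linarith : (0:ℝ) < β2 - β1) (by linarith : (0:ℝ) < α - δ)]
  have hD1 : 0 < D1 := hD2.trans hD12
  have hS1 : D1 + k ≤ 2 * (α + δ) - 2 * α * δ := by
    rw [hD1e, hke]
    nlinarith [mul_nonneg hb1 (by linarith : (0:ℝ) ≤ α - δ)]
  have hS2 : D2 + k ≤ 2 * (α + δ) - 2 * α * δ := by
    rw [hD2e, hke]
    nlinarith [mul_nonneg (hb1.trans hb12.le) (by linarith : (0:ℝ) ≤ α - δ)]
  have hceq : c = t * (2 * (α + δ) - 2 * α * δ) / 2 - k * (v - t) / 2 := by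
    rw [hce, hke]; ring
  have P1 : (v - t) / 2 * D1 ^ 2 < c * D1 + 2 * c * k :=
    stmt_10_P t (v - t) k D1 c _ (by linarith) (by linarith) hk hD1 hS1 hceq
  have P2 : (v - t) / 2 * D2 ^ 2 < c * D2 + 2 * c * k :=
    stmt_10_P t (v - t) k D2 c _ (by linarith) (by linarith) hk hD2 hS2 hceq
  have hm : 0 < (v - t) / 2 := by linarith
  have hR := stmt_10_key c ((v - t) / 2) k D1 D2 hc hm hk hD1 hD2 P1 P2
  -- rewrite the goal in terms of c, k, D1, D2
  have hL1 : α * δ * (t - 2 * v) + v * (α + δ) - β1 * (α - δ) * (v - t)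
      = c + (v - t) / 2 * D1 := by rw [hce, hD1e]; ring
  have hL2 : α * δ * (t - 2 * v) + v * (α + δ) - β2 * (α - δ) * (v - t)
      = c + (v - t) / 2 * D2 := by rw [hce, hD2e]; ring
  have hN1 : α * (1 - β1) + δ * (1 - α + β1) = (D1 + k) / 2 := by rw [hD1e, hke]; ring
  have hN2 : α * (1 - β2) + δ * (1 - α + β2) = (D2 + k) / 2 := by rw [hD2e, hke]; ring
  rw [hL1, hL2, hN1, hN2, ← hD1e, ← hD2e]
  rw [div_lt_div_iff₀ (mul_pos (by linarith : (0:ℝ) < 2*t) (pow_pos hD1 2)) (mul_pos (by linarith : (0:ℝ) < 2*t) (pow_pos hD2 2))]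
  have hprod : 0 < (D1 - D2) *
      ((2 * c * ((v - t) / 2) * k * D1 * D2 + c ^ 2 * D1 * D2 + c ^ 2 * k * (D1 + D2))
        - ((v - t) / 2) ^ 2 * D1 ^ 2 * D2 ^ 2) :=
    mul_pos (by linarith) (by linarith)
  have hrt : 0 < (1 - r) * t := mul_pos (by linarith) ht
  nlinarith [mul_pos hrt hprod]
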